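/- For every integer n ≥ 2, tot_n(121) = ((n+1)·3^(n−3) + n − 3)/4; equivalently, 4·tot_n(121) = (n+1)·3^(n−3) + n − 3 (for n = 2 this is interpreted as 4·tot_2(121) = 3·3^(−1) + (−1) = 0, i.e., tot_2(121) = 0). -/

import Mathlib

open scoped BigOperators

/-- `w` is a Catalan word: it is nonempty, starts with `1`, and each subsequent
letter lies between `1` and the previous letter plus one. -/
def IsCatalan (w : List ℕ) : Prop :=
  w ≠ [] ∧ w.getD 0 0 = 1 ∧
    ∀ i, i + 1 < w.length →
      1 ≤ w.getD (i + 1) 0 ∧ w.getD (i + 1) 0 ≤ w.getD i 0 + 1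

/-- `i` is the starting index of a maximal weakly increasing run of `w`. -/
def RunStart (w : List ℕ) (i : ℕ) : Prop :=
  i < w.length ∧ (i = 0 ∨ w.getD i 0 < w.getD (i - 1) 0)

/-- `w` is flattened: the first letters of its increasing runs, read left to
right, form a weakly nondecreasing sequence. -/
def IsFlattened (w : List ℕ) : Prop :=
  ∀ i j, RunStart w i → RunStart w j → i ≤ j → w.getD i 0 ≤ w.getD j 0

/-- The set of flattened Catalan words of length `n`. -/
def FlatCat (n : ℕ) : Set (List ℕ) :=
  {w | w.length = n ∧ IsCatalan w ∧ IsFlattened w}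

/-- `i` is the starting index of an occurrence of the consecutive pattern `τ`
in the word `w`, i.e. the factor of `w` of length `|τ|` starting at `i` is
order-isomorphic to `τ`. -/
def OccAt (τ w : List ℕ) (i : ℕ) : Prop :=
  i + τ.length ≤ w.length ∧
    ∀ s < τ.length, ∀ t < τ.length,
      (w.getD (i + s) 0 < w.getD (i + t) 0 ↔ τ.getD s 0 < τ.getD t 0)

/-- The number of occurrences of the consecutive pattern `τ` in `w`. -/
noncomputable def numOcc (τ w : List ℕ) : ℕ :=
  Set.ncard {i | OccAt τ w i}

/-- The number of distinct letters in the terminal (rightmost) increasing run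
of `w`, i.e. in the longest weakly increasing suffix of `w`. -/
noncomputable def trun (w : List ℕ) : ℕ :=
  ((w.drop (sInf {i | List.Chain' (· ≤ ·) (w.drop i)})).toFinset).card

/-- The total number of occurrences of the consecutive pattern `τ` over all
flattened Catalan words of length `n`. -/
noncomputable def tot (n : ℕ) (τ : List ℕ) : ℕ :=
  ∑ᶠ w ∈ FlatCat n, numOcc τ w

namespace TotAux

def lastVal (w : List ℕ) : ℕ := w.getLastD 0

def lrsAux : ℕ → List ℕ → ℕ
  | v, [] => v
  | v, a :: t => if a ≤ v then lrsAux a t else v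

def lrs (w : List ℕ) : ℕ := lrsAux (w.reverse.headD 1) w.reverse.tail

lemma lastVal_concat (w : List ℕ) (x : ℕ) : lastVal (w ++ [x]) = x :=
  List.getLastD_concat

lemma lastVal_singleton (a : ℕ) : lastVal [a] = a := rfl

lemma lrs_singleton (a : ℕ) : lrs [a] = a := rfl

lemma lrs_concat (w : List ℕ) (hw : w ≠ []) (x : ℕ) :
    lrs (w ++ [x]) = if lastVal w ≤ x then lrs w else x := by
  rcases List.eq_nil_or_concat w with rfl | ⟨L, b, rfl⟩
  · exact absurd rfl hw
  · simp only [List.concat_eq_append, lastVal_concat]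
    simp [lrs, lrsAux, List.reverse_append]

lemma lrs_le_lastVal (w : List ℕ) (hw : w ≠ []) : lrs w ≤ lastVal w := by
  induction w using List.reverseRecOn with
  | nil => exact absurd rfl hw
  | append_singleton ys x ih =>
    rcases List.eq_nil_or_concat ys with rfl | ⟨L, b, rfl⟩
    · simp [lrs_singleton, lastVal_singleton]
    · rw [lrs_concat _ (by simp) x, lastVal_concat]
      split_ifs with h
      · exact le_trans (ih (by simp)) h
      · exact le_refl x

lemma getD_concat_lt (w : List ℕ) (x : ℕ) (i : ℕ) (h : i < w.length) :
    (w ++ [x]).getD i 0 = w.getD i 0 :=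
  List.getD_append _ _ _ _ h

lemma getD_concat_self (w : List ℕ) (x : ℕ) :
    (w ++ [x]).getD w.length 0 = x := by
  rw [List.getD_append_right _ _ _ _ (le_refl _)]
  simp

lemma lastVal_eq_getD (w : List ℕ) (hw : w ≠ []) :
    lastVal w = w.getD (w.length - 1) 0 := by
  rcases List.eq_nil_or_concat w with rfl | ⟨L, b, rfl⟩
  · exact absurd rfl hw
  · simp only [List.concat_eq_append, lastVal_concat, List.length_append,
      List.length_singleton, Nat.add_sub_cancel]
    rw [getD_concat_self]


lemma runStart_concat_lt (w : List ℕ) (x : ℕ) (i : ℕ) (h : i < w.length) :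
    RunStart (w ++ [x]) i ↔ RunStart w i := by
  unfold RunStart
  rw [getD_concat_lt _ _ _ h, getD_concat_lt _ _ _ (by omega)]
  simp only [List.length_append, List.length_singleton]
  omega

lemma runStart_concat_self (w : List ℕ) (hw : w ≠ []) (x : ℕ) :
    RunStart (w ++ [x]) w.length ↔ x < lastVal w := by
  have hl : 0 < w.length := List.length_pos_iff.mpr hw
  unfold RunStart
  rw [getD_concat_self, getD_concat_lt _ _ _ (by omega), ← lastVal_eq_getD _ hw]
  simp only [List.length_append, List.length_singleton]
  omega

lemma runStart_concat_le (w : List ℕ) (x : ℕ) (j : ℕ) (h : RunStart (w ++ [x]) j) :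
    j ≤ w.length := by
  have := h.1
  simp only [List.length_append, List.length_singleton] at this
  omega

lemma runStart_zero (w : List ℕ) (hw : w ≠ []) : RunStart w 0 :=
  ⟨List.length_pos_iff.mpr hw, Or.inl rfl⟩

/-- The last run start attains `lrs` and dominates all run starts. -/
lemma maxRun (w : List ℕ) (hw : w ≠ []) :
    ∃ i, RunStart w i ∧ w.getD i 0 = lrs w ∧ ∀ j, RunStart w j → j ≤ i := by
  induction w using List.reverseRecOn with
  | nil => exact absurd rfl hw
  | append_singleton ys x ih =>
    rcases List.eq_nil_or_concat ys with rfl | ⟨L, b, hys⟩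
    · refine ⟨0, runStart_zero _ (by simp), by simp [lrs_singleton], ?_⟩
      intro j hj
      have := hj.1
      simp at this
      omega
    · have hys' : ys ≠ [] := by rw [hys]; simp
      by_cases hx : lastVal ys ≤ x
      · obtain ⟨i₀, hi₀, hv₀, hm₀⟩ := ih hys'
        refine ⟨i₀, (runStart_concat_lt _ _ _ hi₀.1).mpr hi₀, ?_, ?_⟩
        · rw [getD_concat_lt _ _ _ hi₀.1, hv₀, lrs_concat _ hys' x, if_pos hx]
        · intro j hj
          rcases lt_or_eq_of_le (runStart_concat_le _ _ _ hj) with hlt | rfl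
          · exact hm₀ j ((runStart_concat_lt _ _ _ hlt).mp hj)
          · exact absurd ((runStart_concat_self _ hys' x).mp hj) (by omega)
      · refine ⟨ys.length, (runStart_concat_self _ hys' x).mpr (by omega), ?_,
          fun j hj => runStart_concat_le _ _ _ hj⟩
        rw [getD_concat_self, lrs_concat _ hys' x, if_neg hx]

lemma runStart_val_le_lrs (w : List ℕ) (hw : w ≠ []) (hf : IsFlattened w)
    (j : ℕ) (hj : RunStart w j) : w.getD j 0 ≤ lrs w := by
  obtain ⟨i, hi, hv, hm⟩ := maxRun w hw
  rw [← hv]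
  exact hf j i hj hi (hm j hj)

lemma letters_pos (w : List ℕ) (hw : IsCatalan w) :
    ∀ i, i < w.length → 1 ≤ w.getD i 0 := by
  rcases hw with ⟨hne, h0, hstep⟩
  intro i
  induction i with
  | zero => intro _; omega
  | succ k ihk => intro hk; exact (hstep k hk).1

lemma one_le_lrs (w : List ℕ) (hw : IsCatalan w) : 1 ≤ lrs w := by
  obtain ⟨i, hi, hv, -⟩ := maxRun w hw.1
  rw [← hv]
  exact letters_pos w hw i hi.1


lemma catalan_concat (w : List ℕ) (hw : w ≠ []) (x : ℕ) :
    IsCatalan (w ++ [x]) ↔ IsCatalan w ∧ 1 ≤ x ∧ x ≤ lastVal w + 1 := by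
  have hl : 0 < w.length := List.length_pos_iff.mpr hw
  unfold IsCatalan
  simp only [List.length_append, List.length_singleton]
  constructor
  · rintro ⟨-, h0, hstep⟩
    rw [getD_concat_lt _ _ _ hl] at h0
    have hx := hstep (w.length - 1) (by omega)
    rw [show w.length - 1 + 1 = w.length by omega, getD_concat_self,
      getD_concat_lt _ _ _ (by omega), ← lastVal_eq_getD _ hw] at hx
    refine ⟨⟨hw, h0, ?_⟩, hx.1, hx.2⟩
    intro i hi
    have := hstep i (by omega)
    rwa [getD_concat_lt _ _ _ (by omega), getD_concat_lt _ _ _ (by omega)] at this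
  · rintro ⟨⟨-, h0, hstep⟩, hx1, hx2⟩
    refine ⟨by simp, by rwa [getD_concat_lt _ _ _ hl], ?_⟩
    intro i hi
    rcases Nat.lt_or_ge (i + 1) w.length with h | h
    · rw [getD_concat_lt _ _ _ h, getD_concat_lt _ _ _ (by omega)]
      exact hstep i h
    · have hieq : i + 1 = w.length := by omega
      rw [hieq, getD_concat_self, getD_concat_lt _ _ _ (by omega),
        show i = w.length - 1 by omega, ← lastVal_eq_getD _ hw]
      exact ⟨hx1, hx2⟩

lemma flattened_concat (w : List ℕ) (hw : w ≠ []) (x : ℕ) :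
    IsFlattened (w ++ [x]) ↔ IsFlattened w ∧ (x < lastVal w → lrs w ≤ x) := by
  constructor
  · intro h
    constructor
    · intro i j hi hj hij
      have := h i j ((runStart_concat_lt _ _ _ hi.1).mpr hi)
        ((runStart_concat_lt _ _ _ hj.1).mpr hj) hij
      rwa [getD_concat_lt _ _ _ hi.1, getD_concat_lt _ _ _ hj.1] at this
    · intro hx
      obtain ⟨i₀, hi₀, hv₀, -⟩ := maxRun w hw
      have := h i₀ w.length ((runStart_concat_lt _ _ _ hi₀.1).mpr hi₀)
        ((runStart_concat_self _ hw x).mpr hx) (le_of_lt hi₀.1)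
      rwa [getD_concat_lt _ _ _ hi₀.1, hv₀, getD_concat_self] at this
  · rintro ⟨hf, hcond⟩
    intro i j hi hj hij
    rcases lt_or_eq_of_le (runStart_concat_le _ _ _ hj) with hjlt | rfl
    · have hilt : i < w.length := lt_of_le_of_lt hij hjlt
      rw [getD_concat_lt _ _ _ hilt, getD_concat_lt _ _ _ hjlt]
      exact hf i j ((runStart_concat_lt _ _ _ hilt).mp hi)
        ((runStart_concat_lt _ _ _ hjlt).mp hj) hij
    · have hx : x < lastVal w := (runStart_concat_self _ hw x).mp hj
      rw [getD_concat_self]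
      rcases lt_or_eq_of_le hij with hilt | rfl
      · rw [getD_concat_lt _ _ _ hilt]
        exact le_trans (runStart_val_le_lrs w hw hf i
          ((runStart_concat_lt _ _ _ hilt).mp hi)) (hcond hx)
      · rw [getD_concat_self]

lemma mem_flatCat_concat {n : ℕ} (hn : 1 ≤ n) {w : List ℕ} (hw : w ∈ FlatCat n) (x : ℕ) :
    (w ++ [x]) ∈ FlatCat (n + 1) ↔ lrs w ≤ x ∧ x ≤ lastVal w + 1 := by
  obtain ⟨hlen, hcat, hflat⟩ := hw
  have hne : w ≠ [] := by
    intro h; rw [h] at hlen; simp at hlen; omega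
  constructor
  · rintro ⟨-, hcat', hflat'⟩
    have h1 := (catalan_concat w hne x).mp hcat'
    have h2 := (flattened_concat w hne x).mp hflat'
    refine ⟨?_, h1.2.2⟩
    rcases Nat.lt_or_ge x (lastVal w) with h | h
    · exact h2.2 h
    · exact le_trans (lrs_le_lastVal w hne) h
  · rintro ⟨hx1, hx2⟩
    refine ⟨by simp [hlen], ?_, ?_⟩
    · exact (catalan_concat w hne x).mpr
        ⟨hcat, le_trans (one_le_lrs w hcat) hx1, hx2⟩
    · exact (flattened_concat w hne x).mpr ⟨hflat, fun _ => hx1⟩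

lemma flatCat_decompose {n : ℕ} (hn : 1 ≤ n) {w' : List ℕ} (hw' : w' ∈ FlatCat (n + 1)) :
    ∃ w x, w' = w ++ [x] ∧ w ∈ FlatCat n ∧ lrs w ≤ x ∧ x ≤ lastVal w + 1 := by
  obtain ⟨hlen, hcat, hflat⟩ := hw'
  rcases List.eq_nil_or_concat w' with rfl | ⟨L, b, rfl⟩
  · simp at hlen
  · simp only [List.concat_eq_append] at *
    have hL : L ≠ [] := by
      intro h; rw [h] at hlen; simp at hlen; omega
    have hLlen : L.length = n := by
      simp at hlen; omega
    have hLmem : L ∈ FlatCat n :=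
      ⟨hLlen, ((catalan_concat L hL b).mp hcat).1, ((flattened_concat L hL b).mp hflat).1⟩
    exact ⟨L, b, rfl, hLmem, (mem_flatCat_concat hn hLmem b).mp ⟨hlen, hcat, hflat⟩⟩


def extList (w : List ℕ) : List (List ℕ) :=
  (List.range' (lrs w) (lastVal w + 2 - lrs w)).map (fun x => w ++ [x])

def FC : ℕ → List (List ℕ)
  | 0 => []
  | 1 => [[1]]
  | (n + 2) => (FC (n + 1)).flatMap extList

lemma FC_succ {n : ℕ} (hn : 1 ≤ n) : FC (n + 1) = (FC n).flatMap extList := by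
  rcases n with _ | m
  · omega
  · rfl

lemma mem_extList {w : List ℕ} (hw : w ≠ []) {y : List ℕ} :
    y ∈ extList w ↔ ∃ x, lrs w ≤ x ∧ x ≤ lastVal w + 1 ∧ y = w ++ [x] := by
  have hsv := lrs_le_lastVal w hw
  unfold extList
  simp only [List.mem_map, List.mem_range'_1]
  constructor
  · rintro ⟨x, ⟨hx1, hx2⟩, rfl⟩
    exact ⟨x, hx1, by omega, rfl⟩
  · rintro ⟨x, hx1, hx2, rfl⟩
    exact ⟨x, ⟨hx1, by omega⟩, rfl⟩

lemma ne_nil_of_mem_flatCat {n : ℕ} (hn : 1 ≤ n) {w : List ℕ} (hw : w ∈ FlatCat n) :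
    w ≠ [] := by
  intro h
  rw [h] at hw
  have := hw.1
  simp at this
  omega

lemma mem_FC : ∀ n, 1 ≤ n → ∀ w, w ∈ FC n ↔ w ∈ FlatCat n := by
  intro n
  induction n with
  | zero => omega
  | succ m ih =>
    intro _ w
    rcases Nat.eq_or_lt_of_le (show 1 ≤ m + 1 from by omega) with h1 | h1
    · -- m = 0
      have hm : m = 0 := by omega
      subst hm
      show w ∈ [[1]] ↔ _
      simp only [List.mem_singleton]
      constructor
      · rintro rfl
        refine ⟨rfl, ⟨by simp, rfl, ?_⟩, ?_⟩
        · intro i hi; simp at hi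
        · intro i j hi hj hij
          have h1 := hi.1
          have h2 := hj.1
          simp only [List.length_singleton] at h1 h2
          interval_cases i
          interval_cases j
          exact le_refl _
      · rintro ⟨hlen, hcat, -⟩
        rcases w with _ | ⟨a, t⟩
        · simp at hlen
        · simp only [List.length_cons] at hlen
          have ht : t = [] := by
            cases t
            · rfl
            · simp at hlen
          subst ht
          have := hcat.2.1
          simp [List.getD] at this
          simp [this]
    · -- 1 ≤ m
      have hm : 1 ≤ m := by omega
      rw [FC_succ hm]
      simp only [List.mem_flatMap]
      constructor
      · rintro ⟨u, hu, hy⟩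
        have humem := (ih hm u).mp hu
        have hune := ne_nil_of_mem_flatCat hm humem
        obtain ⟨x, hx1, hx2, rfl⟩ := (mem_extList hune).mp hy
        exact (mem_flatCat_concat hm humem x).mpr ⟨hx1, hx2⟩
      · intro hw
        obtain ⟨u, x, rfl, humem, hx1, hx2⟩ := flatCat_decompose hm hw
        have hune := ne_nil_of_mem_flatCat hm humem
        exact ⟨u, (ih hm u).mpr humem, (mem_extList hune).mpr ⟨x, hx1, hx2, rfl⟩⟩

lemma nodup_extList (w : List ℕ) : (extList w).Nodup := by
  unfold extList
  refine List.Nodup.map ?_ (List.nodup_range')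
  intro a b hab
  have := List.append_cancel_left hab
  simpa using this

lemma nodup_FC : ∀ n, (FC n).Nodup := by
  intro n
  induction n with
  | zero => exact List.nodup_nil
  | succ m ih =>
    rcases m with _ | k
    · simp [FC]
    · show ((FC (k + 1)).flatMap extList).Nodup
      rw [List.nodup_flatMap]
      refine ⟨fun u _ => nodup_extList u, ?_⟩
      refine ih.imp ?_
      intro a b hab
      intro y hya hyb
      unfold extList at hya hyb
      simp only [List.mem_map] at hya hyb
      obtain ⟨x1, -, rfl⟩ := hya
      obtain ⟨x2, -, h⟩ := hyb
      have hlen : b.length = a.length := by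
        have := congrArg List.length h
        simp at this
        omega
      have : b = a := by
        have h1 := congrArg (List.take a.length) h
        rw [List.take_left] at h1
        rw [← hlen] at h1
        rw [List.take_left] at h1
        exact h1
      exact hab this.symm


def occP (w : List ℕ) (i : ℕ) : Prop :=
  i + 3 ≤ w.length ∧ w.getD i 0 = w.getD (i + 2) 0 ∧ w.getD i 0 < w.getD (i + 1) 0

instance occP_dec (w : List ℕ) (i : ℕ) : Decidable (occP w i) := by
  unfold occP; infer_instance

def occCnt (w : List ℕ) : ℕ :=
  ((Finset.range w.length).filter (occP w)).card

lemma occP_concat (w : List ℕ) (hw : w ≠ []) (x : ℕ) (i : ℕ) :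
    occP (w ++ [x]) i ↔
      (occP w i ∨
        (2 ≤ w.length ∧ i = w.length - 2 ∧ w.getD (w.length - 2) 0 = x ∧
          x < lastVal w)) := by
  have hl : 0 < w.length := List.length_pos_iff.mpr hw
  unfold occP
  simp only [List.length_append, List.length_singleton]
  constructor
  · rintro ⟨h1, h2, h3⟩
    rcases Nat.lt_or_ge (i + 3) (w.length + 1) with h | h
    · left
      rw [getD_concat_lt w x i (by omega), getD_concat_lt w x (i + 2) (by omega)] at h2
      rw [getD_concat_lt w x i (by omega), getD_concat_lt w x (i + 1) (by omega)] at h3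
      exact ⟨by omega, h2, h3⟩
    · right
      have h2len : 2 ≤ w.length := by omega
      have hi : i = w.length - 2 := by omega
      have e0 : (w ++ [x]).getD i 0 = w.getD i 0 := getD_concat_lt w x i (by omega)
      have e2 : (w ++ [x]).getD (i + 2) 0 = x := by
        rw [show i + 2 = w.length by omega]; exact getD_concat_self w x
      have e1 : (w ++ [x]).getD (i + 1) 0 = lastVal w := by
        rw [show i + 1 = w.length - 1 by omega, getD_concat_lt w x _ (by omega),
          ← lastVal_eq_getD _ hw]
      rw [e0, e2] at h2
      rw [e0, e1] at h3
      rw [h2] at h3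
      exact ⟨h2len, hi, hi ▸ h2, h3⟩
  · rintro (⟨h1, h2, h3⟩ | ⟨h2len, hi, h2, h3⟩)
    · rw [getD_concat_lt w x i (by omega), getD_concat_lt w x (i + 2) (by omega),
        getD_concat_lt w x (i + 1) (by omega)]
      exact ⟨by omega, h2, h3⟩
    · subst hi
      have e0 : (w ++ [x]).getD (w.length - 2) 0 = w.getD (w.length - 2) 0 :=
        getD_concat_lt w x _ (by omega)
      have e2 : (w ++ [x]).getD (w.length - 2 + 2) 0 = x := by
        rw [show w.length - 2 + 2 = w.length by omega]; exact getD_concat_self w x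
      have e1 : (w ++ [x]).getD (w.length - 2 + 1) 0 = lastVal w := by
        rw [show w.length - 2 + 1 = w.length - 1 by omega,
          getD_concat_lt w x _ (by omega), ← lastVal_eq_getD _ hw]
      rw [e0, e1, e2, h2]
      exact ⟨by omega, rfl, h3⟩

lemma occP_lt_length {w : List ℕ} {i : ℕ} (h : occP w i) : i < w.length := by
  have := h.1; omega

def delta (w : List ℕ) (x : ℕ) : ℕ :=
  if 2 ≤ w.length ∧ w.getD (w.length - 2) 0 = x ∧ x < lastVal w then 1 else 0

lemma occCnt_concat (w : List ℕ) (hw : w ≠ []) (x : ℕ) :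
    occCnt (w ++ [x]) = occCnt w + delta w x := by
  classical
  have hl : 0 < w.length := List.length_pos_iff.mpr hw
  unfold occCnt delta
  simp only [List.length_append, List.length_singleton]
  by_cases hc : 2 ≤ w.length ∧ w.getD (w.length - 2) 0 = x ∧ x < lastVal w
  · rw [if_pos hc]
    have hset : (Finset.range (w.length + 1)).filter (occP (w ++ [x]))
        = insert (w.length - 2) ((Finset.range w.length).filter (occP w)) := by
      ext i
      simp only [Finset.mem_filter, Finset.mem_range, Finset.mem_insert]
      rw [occP_concat w hw x i]
      constructor
      · rintro ⟨hi, hP | hR⟩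
        · exact Or.inr ⟨occP_lt_length hP, hP⟩
        · exact Or.inl hR.2.1
      · rintro (rfl | ⟨hi, hP⟩)
        · exact ⟨by omega, Or.inr ⟨hc.1, rfl, hc.2⟩⟩
        · exact ⟨by omega, Or.inl hP⟩
    rw [hset, Finset.card_insert_of_notMem]
    intro hmem
    simp only [Finset.mem_filter] at hmem
    have := hmem.2.1
    omega
  · rw [if_neg hc]
    have hset : (Finset.range (w.length + 1)).filter (occP (w ++ [x]))
        = (Finset.range w.length).filter (occP w) := by
      ext i
      simp only [Finset.mem_filter, Finset.mem_range]
      rw [occP_concat w hw x i]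
      constructor
      · rintro ⟨hi, hP | hR⟩
        · exact ⟨occP_lt_length hP, hP⟩
        · exact absurd ⟨hR.1, hR.2.2⟩ hc
      · rintro ⟨hi, hP⟩
        exact ⟨by omega, Or.inl hP⟩
    rw [hset]
    omega


lemma occAt_iff (w : List ℕ) (i : ℕ) :
    OccAt [1, 2, 1] w i ↔ i < w.length ∧ occP w i := by
  unfold OccAt occP
  simp only [List.length_cons, List.length_nil]
  have t0 : ([1, 2, 1] : List ℕ).getD 0 0 = 1 := rfl
  have t1 : ([1, 2, 1] : List ℕ).getD 1 0 = 2 := rfl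
  have t2 : ([1, 2, 1] : List ℕ).getD 2 0 = 1 := rfl
  constructor
  · rintro ⟨h1, h2⟩
    have a01 := h2 0 (by norm_num) 1 (by norm_num)
    have a02 := h2 0 (by norm_num) 2 (by norm_num)
    have a20 := h2 2 (by norm_num) 0 (by norm_num)
    simp only [t0, t1, t2, Nat.add_zero] at a01 a02 a20
    omega
  · rintro ⟨hi, h1, h2, h3⟩
    refine ⟨by omega, ?_⟩
    intro s hs t ht
    interval_cases s <;> interval_cases t <;>
      simp only [t0, t1, t2, Nat.add_zero] <;> omega

lemma numOcc_eq_occCnt (w : List ℕ) : numOcc [1, 2, 1] w = occCnt w := by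
  unfold numOcc occCnt
  have : {i | OccAt [1, 2, 1] w i} = ↑((Finset.range w.length).filter (occP w)) := by
    ext i
    simp only [Set.mem_setOf_eq, Finset.coe_filter, Finset.mem_range, occAt_iff]
  rw [this, Set.ncard_coe_finset]


section Sums

lemma sum_map_add {α : Type*} (l : List α) (f g : α → ℕ) :
    (l.map (fun a => f a + g a)).sum = (l.map f).sum + (l.map g).sum := by
  induction l with
  | nil => simp
  | cons a t ih => simp [ih]; omega

lemma sum_map_const {α : Type*} (l : List α) (c : ℕ) :
    (l.map (fun _ => c)).sum = c * l.length := by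
  induction l with
  | nil => simp
  | cons a t ih => simp [ih]; ring

lemma sum_map_flatMap {α β : Type*} (l : List α) (g : α → List β) (f : β → ℕ) :
    ((l.flatMap g).map f).sum = (l.map (fun a => ((g a).map f).sum)).sum := by
  induction l with
  | nil => simp
  | cons a t ih => simp [ih]

lemma sum_indicator (l : List ℕ) (u : ℕ) (h : l.Nodup) (hu : u ∈ l) :
    (l.map (fun x => if x = u then 1 else 0)).sum = 1 := by
  induction l with
  | nil => simp at hu
  | cons a t ih =>
    rcases List.mem_cons.mp hu with rfl | hut
    · have hna : u ∉ t := (List.nodup_cons.mp h).1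
      simp only [List.map_cons, List.sum_cons, if_pos rfl]
      have : (t.map (fun x => if x = u then 1 else 0)).sum = 0 := by
        apply List.sum_eq_zero
        intro y hy
        obtain ⟨x, hx, rfl⟩ := List.mem_map.mp hy
        rw [if_neg]
        intro hxu; exact absurd (hxu ▸ hx) hna
      rw [this]
      simp
    · have hau : a ≠ u := by
        rintro rfl; exact absurd hut (List.nodup_cons.mp h).1
      simp only [List.map_cons, List.sum_cons, if_neg hau]
      rw [ih (List.nodup_cons.mp h).2 hut]

end Sums

section Ext

variable {w : List ℕ} (hw : w ≠ [])

def dval (w : List ℕ) : ℕ := lastVal w - lrs w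

def ascVal (w : List ℕ) : ℕ :=
  if 2 ≤ w.length ∧ w.getD (w.length - 2) 0 < lastVal w then 1 else 0

include hw

lemma range'_split :
    List.range' (lrs w) (lastVal w + 2 - lrs w)
      = List.range' (lrs w) (lastVal w - lrs w) ++ [lastVal w, lastVal w + 1] := by
  have hsv := lrs_le_lastVal w hw
  have h := List.range'_append (s := lrs w) (m := lastVal w - lrs w) (n := 2) (step := 1)
  rw [show lrs w + 1 * (lastVal w - lrs w) = lastVal w by omega] at h
  rw [show lastVal w + 2 - lrs w = lastVal w - lrs w + 2 by omega, ← h]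
  rfl

lemma dval_concat_lt {x : ℕ} (hx : x < lastVal w) : dval (w ++ [x]) = 0 := by
  unfold dval
  rw [lastVal_concat, lrs_concat _ hw, if_neg (by omega)]
  omega

lemma dval_concat_ge {x : ℕ} (hx : lastVal w ≤ x) :
    dval (w ++ [x]) = x - lrs w := by
  unfold dval
  rw [lastVal_concat, lrs_concat _ hw, if_pos hx]

lemma ascVal_concat (x : ℕ) :
    ascVal (w ++ [x]) = if lastVal w < x then 1 else 0 := by
  have hl : 0 < w.length := List.length_pos_iff.mpr hw
  unfold ascVal
  rw [lastVal_concat]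
  simp only [List.length_append, List.length_singleton]
  rw [show w.length + 1 - 2 = w.length - 1 by omega,
    getD_concat_lt w x _ (by omega), ← lastVal_eq_getD _ hw]
  have : (2 ≤ w.length + 1 ∧ lastVal w < x) ↔ lastVal w < x := by
    constructor
    · exact fun h => h.2
    · exact fun h => ⟨by omega, h⟩
  rw [if_congr this rfl rfl]

lemma lrs_le_sublast (h2 : 2 ≤ w.length)
    (hlt : w.getD (w.length - 2) 0 < lastVal w) :
    lrs w ≤ w.getD (w.length - 2) 0 := by
  rcases List.eq_nil_or_concat w with rfl | ⟨L, b, rfl⟩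
  · exact absurd rfl hw
  · simp only [List.concat_eq_append] at *
    have hL : L ≠ [] := by
      intro h; rw [h] at h2; simp at h2
    have hLlen : 0 < L.length := List.length_pos_iff.mpr hL
    have hsub : (L ++ [b]).getD (L.length + 1 - 2) 0 = lastVal L := by
      rw [show L.length + 1 - 2 = L.length - 1 by omega,
        getD_concat_lt L b _ (by omega), ← lastVal_eq_getD _ hL]
    simp only [List.length_append, List.length_singleton] at hlt ⊢
    rw [hsub] at hlt ⊢
    rw [lastVal_concat] at hlt
    rw [lrs_concat _ hL, if_pos (le_of_lt hlt)]
    exact lrs_le_lastVal L hL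

lemma sum_delta :
    ((List.range' (lrs w) (lastVal w + 2 - lrs w)).map (delta w)).sum = ascVal w := by
  have hsv := lrs_le_lastVal w hw
  by_cases hc : 2 ≤ w.length ∧ w.getD (w.length - 2) 0 < lastVal w
  · have hsu : lrs w ≤ w.getD (w.length - 2) 0 := lrs_le_sublast hw hc.1 hc.2
    have hmap : (List.range' (lrs w) (lastVal w + 2 - lrs w)).map (delta w)
        = (List.range' (lrs w) (lastVal w + 2 - lrs w)).map
            (fun x => if x = w.getD (w.length - 2) 0 then 1 else 0) := by
      apply List.map_congr_left
      intro x hx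
      unfold delta
      by_cases hxe : x = w.getD (w.length - 2) 0
      · rw [if_pos ⟨hc.1, hxe.symm, hxe ▸ hc.2⟩, if_pos hxe]
      · rw [if_neg (fun h => hxe h.2.1.symm), if_neg hxe]
    rw [hmap, sum_indicator _ _ (List.nodup_range') ?_]
    · unfold ascVal
      rw [if_pos hc]
    · rw [List.mem_range'_1]
      constructor
      · exact hsu
      · omega
  · have hmap : ∀ y ∈ (List.range' (lrs w) (lastVal w + 2 - lrs w)).map (delta w),
        y = 0 := by
      intro y hy
      obtain ⟨x, hx, rfl⟩ := List.mem_map.mp hy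
      unfold delta
      rw [if_neg]
      rintro ⟨ha, hb, hcc⟩
      exact hc ⟨ha, hb ▸ hcc⟩
    rw [List.sum_eq_zero hmap]
    unfold ascVal
    rw [if_neg hc]

end Ext


section ExtSums

variable {w : List ℕ} (hw : w ≠ [])

include hw

omit hw in
lemma extList_map_eq (f : List ℕ → ℕ) :
    ((extList w).map f).sum
      = ((List.range' (lrs w) (lastVal w + 2 - lrs w)).map (fun x => f (w ++ [x]))).sum := by
  unfold extList
  rw [List.map_map]
  rfl

lemma length_extList : (extList w).length = dval w + 2 := by
  have hsv := lrs_le_lastVal w hw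
  unfold extList dval
  rw [List.length_map, List.length_range']
  omega

lemma sumExt_occ :
    ((extList w).map occCnt).sum = (dval w + 2) * occCnt w + ascVal w := by
  have hsv := lrs_le_lastVal w hw
  rw [extList_map_eq _]
  have hmap : (List.range' (lrs w) (lastVal w + 2 - lrs w)).map (fun x => occCnt (w ++ [x]))
      = (List.range' (lrs w) (lastVal w + 2 - lrs w)).map (fun x => occCnt w + delta w x) := by
    apply List.map_congr_left
    intro x _
    exact occCnt_concat w hw x
  rw [hmap, sum_map_add, sum_map_const, sum_delta hw, List.length_range']
  unfold dval
  rw [show lastVal w + 2 - lrs w = lastVal w - lrs w + 2 by omega, Nat.mul_comm]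

lemma sumExt_dval : ((extList w).map dval).sum = 2 * dval w + 1 := by
  have hsv := lrs_le_lastVal w hw
  rw [extList_map_eq _, range'_split hw]
  rw [List.map_append, List.sum_append]
  have h0 : ((List.range' (lrs w) (lastVal w - lrs w)).map
      (fun x => dval (w ++ [x]))).sum = 0 := by
    apply List.sum_eq_zero
    intro y hy
    obtain ⟨x, hx, rfl⟩ := List.mem_map.mp hy
    rw [List.mem_range'_1] at hx
    exact dval_concat_lt hw (by omega)
  rw [h0]
  simp only [List.map_cons, List.map_nil, List.sum_cons, List.sum_nil]
  rw [dval_concat_ge hw (le_refl _), dval_concat_ge hw (by omega)]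
  unfold dval
  omega

lemma sumExt_dvalOcc :
    ((extList w).map (fun u => dval u * occCnt u)).sum = (2 * dval w + 1) * occCnt w := by
  have hsv := lrs_le_lastVal w hw
  rw [extList_map_eq _, range'_split hw]
  rw [List.map_append, List.sum_append]
  have h0 : ((List.range' (lrs w) (lastVal w - lrs w)).map
      (fun x => dval (w ++ [x]) * occCnt (w ++ [x]))).sum = 0 := by
    apply List.sum_eq_zero
    intro y hy
    obtain ⟨x, hx, rfl⟩ := List.mem_map.mp hy
    rw [List.mem_range'_1] at hx
    rw [dval_concat_lt hw (by omega)]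
    ring
  rw [h0]
  simp only [List.map_cons, List.map_nil, List.sum_cons, List.sum_nil]
  rw [dval_concat_ge hw (le_refl _), dval_concat_ge hw (by omega),
    occCnt_concat w hw, occCnt_concat w hw]
  have hd1 : delta w (lastVal w) = 0 := by
    unfold delta
    rw [if_neg]
    rintro ⟨-, -, hcc⟩
    omega
  have hd2 : delta w (lastVal w + 1) = 0 := by
    unfold delta
    rw [if_neg]
    rintro ⟨-, -, hcc⟩
    omega
  rw [hd1, hd2]
  unfold dval
  rw [show lastVal w + 1 - lrs w = lastVal w - lrs w + 1 by omega]
  ring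

lemma sumExt_asc : ((extList w).map ascVal).sum = 1 := by
  have hsv := lrs_le_lastVal w hw
  rw [extList_map_eq _]
  have hmap : (List.range' (lrs w) (lastVal w + 2 - lrs w)).map (fun x => ascVal (w ++ [x]))
      = (List.range' (lrs w) (lastVal w + 2 - lrs w)).map
          (fun x => if x = lastVal w + 1 then 1 else 0) := by
    apply List.map_congr_left
    intro x hx
    rw [List.mem_range'_1] at hx
    rw [ascVal_concat hw x]
    by_cases hxe : x = lastVal w + 1
    · rw [if_pos (by omega), if_pos hxe]
    · rw [if_neg (by omega), if_neg hxe]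
  rw [hmap, sum_indicator _ _ (List.nodup_range')]
  rw [List.mem_range'_1]
  omega

end ExtSums


def fn (n : ℕ) : ℕ := (FC n).length
def Dn (n : ℕ) : ℕ := ((FC n).map dval).sum
def Tn (n : ℕ) : ℕ := ((FC n).map occCnt).sum
def Sn (n : ℕ) : ℕ := ((FC n).map (fun w => dval w * occCnt w)).sum
def An (n : ℕ) : ℕ := ((FC n).map ascVal).sum

lemma FC_ne_nil {n : ℕ} (hn : 1 ≤ n) {w : List ℕ} (hw : w ∈ FC n) : w ≠ [] :=
  ne_nil_of_mem_flatCat hn ((mem_FC n hn w).mp hw)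

lemma sum_FC_succ {n : ℕ} (hn : 1 ≤ n) (f g : List ℕ → ℕ)
    (hval : ∀ w ∈ FC n, ((extList w).map f).sum = g w) :
    ((FC (n + 1)).map f).sum = ((FC n).map g).sum := by
  rw [FC_succ hn, sum_map_flatMap]
  exact congrArg List.sum (List.map_congr_left hval)

lemma sum_map_two_mul {α : Type*} (l : List α) (f : α → ℕ) :
    (l.map (fun a => 2 * f a)).sum = 2 * (l.map f).sum := by
  induction l with
  | nil => simp
  | cons a t ih => simp [ih]; ring

lemma fn_succ (n : ℕ) (hn : 1 ≤ n) : fn (n + 1) = 2 * fn n + Dn n := by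
  unfold fn Dn
  rw [FC_succ hn, List.length_flatMap]
  have h1 : (FC n).map (fun a => (extList a).length)
      = (FC n).map (fun w => dval w + 2) :=
    List.map_congr_left (fun w hw => length_extList (FC_ne_nil hn hw))
  rw [h1, sum_map_add, sum_map_const]
  omega

lemma Dn_succ (n : ℕ) (hn : 1 ≤ n) : Dn (n + 1) = 2 * Dn n + fn n := by
  unfold Dn
  rw [sum_FC_succ hn dval (fun w => 2 * dval w + 1)
    (fun w hw => sumExt_dval (FC_ne_nil hn hw))]
  rw [sum_map_add, sum_map_two_mul, sum_map_const]
  unfold fn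
  omega

lemma An_succ (n : ℕ) (hn : 1 ≤ n) : An (n + 1) = fn n := by
  unfold An
  rw [sum_FC_succ hn ascVal (fun _ => 1)
    (fun w hw => sumExt_asc (FC_ne_nil hn hw))]
  rw [sum_map_const]
  unfold fn
  omega

lemma Tn_succ (n : ℕ) (hn : 1 ≤ n) : Tn (n + 1) = 2 * Tn n + Sn n + An n := by
  unfold Tn
  rw [sum_FC_succ hn occCnt (fun w => (dval w + 2) * occCnt w + ascVal w)
    (fun w hw => sumExt_occ (FC_ne_nil hn hw))]
  have h1 : (FC n).map (fun w => (dval w + 2) * occCnt w + ascVal w)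
      = (FC n).map (fun w => (dval w * occCnt w + 2 * occCnt w) + ascVal w) := by
    apply List.map_congr_left
    intro w _
    ring
  rw [h1, sum_map_add, sum_map_add, sum_map_two_mul]
  unfold Sn An
  omega

lemma Sn_succ (n : ℕ) (hn : 1 ≤ n) : Sn (n + 1) = 2 * Sn n + Tn n := by
  unfold Sn
  rw [sum_FC_succ hn (fun w => dval w * occCnt w) (fun w => (2 * dval w + 1) * occCnt w)
    (fun w hw => sumExt_dvalOcc (FC_ne_nil hn hw))]
  have h1 : (FC n).map (fun w => (2 * dval w + 1) * occCnt w)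
      = (FC n).map (fun w => 2 * (dval w * occCnt w) + occCnt w) := by
    apply List.map_congr_left
    intro w _
    ring
  rw [h1, sum_map_add, sum_map_two_mul]
  unfold Tn
  omega

lemma base3 : 2 * fn 3 = 3 ^ 2 + 1 ∧ 2 * Dn 3 + 1 = 3 ^ 2 ∧ 2 * An 3 = 3 ^ 1 + 1 ∧
    4 * Tn 3 = 4 * 3 ^ 0 + 0 ∧ 4 * Sn 3 + 1 = 1 * 3 ^ 0 := by
  decide


lemma closed : ∀ k : ℕ,
    2 * fn (k + 3) = 3 ^ (k + 2) + 1 ∧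
    2 * Dn (k + 3) + 1 = 3 ^ (k + 2) ∧
    2 * An (k + 3) = 3 ^ (k + 1) + 1 ∧
    4 * Tn (k + 3) = (k + 4) * 3 ^ k + k ∧
    4 * Sn (k + 3) + (k + 1) = (k + 1) * 3 ^ k := by
  intro k
  induction k with
  | zero => exact base3
  | succ k ih =>
    obtain ⟨h1, h2, h3, h4, h5⟩ := ih
    have hn : 1 ≤ k + 3 := by omega
    have rf := fn_succ (k + 3) hn
    have rD := Dn_succ (k + 3) hn
    have rA := An_succ (k + 3) hn
    have rT := Tn_succ (k + 3) hn
    have rS := Sn_succ (k + 3) hn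
    have he2 : (3 : ℕ) ^ (k + 3) = 3 ^ (k + 2) * 3 := pow_succ 3 (k + 2)
    have he1 : (3 : ℕ) ^ (k + 2) = 3 ^ (k + 1) * 3 := pow_succ 3 (k + 1)
    have he0 : (3 : ℕ) ^ (k + 1) = 3 ^ k * 3 := pow_succ 3 k
    refine ⟨?_, ?_, ?_, ?_, ?_⟩
    · show 2 * fn (k + 3 + 1) = 3 ^ (k + 3) + 1
      rw [rf, he2]
      omega
    · show 2 * Dn (k + 3 + 1) + 1 = 3 ^ (k + 3)
      rw [rD, he2]
      omega
    · show 2 * An (k + 3 + 1) = 3 ^ (k + 2) + 1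
      rw [rA]
      exact h1
    · show 4 * Tn (k + 3 + 1) = (k + 1 + 4) * 3 ^ (k + 1) + (k + 1)
      rw [rT]
      zify at h3 h4 h5 ⊢
      have he : (3 : ℤ) ^ (k + 1) = 3 * 3 ^ k := by
        rw [pow_succ]; ring
      linear_combination 2 * h4 + h5 + 2 * h3 - ((k : ℤ) + 3) * he
    · show 4 * Sn (k + 3 + 1) + (k + 1 + 1) = (k + 1 + 1) * 3 ^ (k + 1)
      rw [rS]
      zify at h4 h5 ⊢
      have he : (3 : ℤ) ^ (k + 1) = 3 * 3 ^ k := by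
        rw [pow_succ]; ring
      linear_combination 2 * h5 + h4 - ((k : ℤ) + 2) * he

lemma FlatCat_eq_FC {n : ℕ} (hn : 1 ≤ n) : FlatCat n = ↑(FC n).toFinset := by
  ext w
  simp only [List.coe_toFinset, Set.mem_setOf_eq]
  exact (mem_FC n hn w).symm

lemma Tn_two : Tn 2 = 0 := by decide

lemma tot_eq (n : ℕ) (hn : 1 ≤ n) : tot n [1, 2, 1] = Tn n := by
  unfold tot
  rw [show FlatCat n = ↑(FC n).toFinset from FlatCat_eq_FC hn, finsum_mem_coe_finset,
    List.sum_toFinset _ (nodup_FC n)]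
  unfold Tn
  exact congrArg List.sum (List.map_congr_left (fun w _ => numOcc_eq_occCnt w))

end TotAux


/-- For every `n ≥ 2`, `4·tot_n(121) = (n+1)·3^(n−3) + n − 3`, as an equality
of real numbers (with an integer exponent, so that the `n = 2` case reads
`4·tot_2(121) = 3·3^(−1) − 1 = 0`). -/
theorem tot_121 (n : ℕ) (hn : 2 ≤ n) :
    (4 * tot n [1, 2, 1] : ℝ)
      = ((n : ℝ) + 1) * (3 : ℝ) ^ ((n : ℤ) - 3) + (n : ℝ) - 3 := by
  rcases Nat.lt_or_ge n 3 with h | h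
  · have hn2 : n = 2 := by omega
    subst hn2
    rw [TotAux.tot_eq 2 (by omega), TotAux.Tn_two]
    norm_num
  · obtain ⟨k, rfl⟩ : ∃ k, n = k + 3 := ⟨n - 3, by omega⟩
    have h4 := (TotAux.closed k).2.2.2.1
    rw [TotAux.tot_eq (k + 3) (by omega)]
    have hz : ((k + 3 : ℕ) : ℤ) - 3 = (k : ℤ) := by push_cast; ring
    rw [hz, zpow_natCast]
    have hr : (4 * TotAux.Tn (k + 3) : ℝ) = ((k : ℝ) + 4) * 3 ^ k + k := by
      exact_mod_cast congrArg (fun m : ℕ => (m : ℝ)) h4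
    push_cast
    push_cast at hr
    linarith [hr]
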